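/- Let G : ℝ → ℝ be bounded, increasing, left-continuous with lim_{x→−∞} G(x) = 0, set y(ξ) = sup{x : x + G(x) < ξ} and H(ξ) = ξ − y(ξ). Then H is increasing, Lipschitz with constant 1, and lim_{ξ→∞} H(ξ) = lim_{x→∞} G(x). -/
import Mathlib


open MeasureTheory Set Filter

/-- For `G` bounded, increasing, left-continuous with `G → 0` at `−∞` and `G → G_∞`
at `+∞`, with `y(ξ) = sup{x : x + G(x) < ξ}` and `H(ξ) = ξ − y(ξ)`, the function `H`
is increasing, `1`-Lipschitz, and `H(ξ) → G_∞` as `ξ → ∞`. -/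
theorem lagrangian_energy_properties
    (G : ℝ → ℝ) (Ginf : ℝ)
    (hbdd : ∃ M : ℝ, ∀ x, |G x| ≤ M)
    (hmono : Monotone G)
    (hleft : ∀ x : ℝ, ContinuousWithinAt G (Set.Iio x) x)
    (hlimB : Tendsto G atBot (nhds 0))
    (hlimT : Tendsto G atTop (nhds Ginf))
    (y H : ℝ → ℝ)
    (hy : ∀ ξ, y ξ = sSup {x : ℝ | x + G x < ξ})
    (hH : ∀ ξ, H ξ = ξ - y ξ) :
    Monotone H ∧ LipschitzWith 1 H ∧ Tendsto H atTop (nhds Ginf) := by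
  obtain ⟨M, hM⟩ := hbdd
  have hGle : ∀ x, G x ≤ Ginf := hmono.ge_of_tendsto hlimT
  have hne : ∀ ξ : ℝ, (ξ - M - 1) ∈ {x : ℝ | x + G x < ξ} := by
    intro ξ
    have h1 : G (ξ - M - 1) ≤ M := (abs_le.mp (hM _)).2
    simp only [Set.mem_setOf_eq]; linarith
  have hbd : ∀ ξ : ℝ, BddAbove {x : ℝ | x + G x < ξ} := by
    intro ξ
    refine ⟨ξ + M, fun x hx => ?_⟩
    have h1 : -M ≤ G x := (abs_le.mp (hM _)).1
    simp only [Set.mem_setOf_eq] at hx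
    linarith
  have hymono : Monotone y := by
    intro a b hab
    rw [hy a, hy b]
    exact csSup_le_csSup (hbd b) ⟨_, hne a⟩ (fun x hx => lt_of_lt_of_le hx hab)
  have hshift : ∀ a b : ℝ, a ≤ b → y b ≤ y a + (b - a) := by
    intro a b hab
    rw [hy a, hy b]
    apply csSup_le ⟨_, hne b⟩
    intro x hx
    have hmem : x - (b - a) ∈ {x : ℝ | x + G x < a} := by
      simp only [Set.mem_setOf_eq] at hx ⊢
      have := hmono (show x - (b - a) ≤ x by linarith)
      linarith
    have := le_csSup (hbd a) hmem
    linarith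
  have hHmono : Monotone H := by
    intro a b hab
    rw [hH a, hH b]
    have := hshift a b hab
    linarith
  have hylb : ∀ ξ, ξ - Ginf ≤ y ξ := by
    intro ξ
    apply le_of_forall_pos_le_add
    intro ε hε
    rw [hy ξ]
    have hmem : ξ - Ginf - ε ∈ {x : ℝ | x + G x < ξ} := by
      simp only [Set.mem_setOf_eq]
      have := hGle (ξ - Ginf - ε)
      linarith
    have := le_csSup (hbd ξ) hmem
    linarith
  refine ⟨hHmono, ?_, ?_⟩
  · rw [lipschitzWith_iff_dist_le_mul]
    intro a b
    rw [Real.dist_eq, Real.dist_eq, NNReal.coe_one, one_mul]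
    rcases le_total a b with hab | hab
    · have h1 := hshift a b hab
      have h2 := hymono hab
      rw [hH a, hH b, abs_le, abs_of_nonpos (by linarith : a - b ≤ 0)]
      constructor <;> linarith
    · have h1 := hshift b a hab
      have h2 := hymono hab
      rw [hH a, hH b, abs_le, abs_of_nonneg (by linarith : 0 ≤ a - b)]
      constructor <;> linarith
  · rw [Metric.tendsto_atTop]
    intro ε hε
    have hε2 : (0:ℝ) < ε / 2 := by linarith
    have hev : ∀ᶠ x in atTop, Ginf - ε / 2 < G x :=
      hlimT.eventually (eventually_gt_nhds (by linarith))
    obtain ⟨X, hX⟩ := eventually_atTop.1 hev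
    refine ⟨X + Ginf, fun ξ hξ => ?_⟩
    have hyub : y ξ ≤ ξ - Ginf + ε / 2 := by
      rw [hy ξ]
      apply csSup_le ⟨_, hne ξ⟩
      intro x hx
      simp only [Set.mem_setOf_eq] at hx
      rcases le_total x X with hxX | hxX
      · linarith
      · have := hX x hxX
        linarith
    have h1 := hylb ξ
    rw [Real.dist_eq, hH ξ, abs_lt]
    constructor <;> linarith
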